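/- Let e ≥ 1, ℓ ≥ 1, N > 0 be integers, let s = (s_1,…,s_ℓ) ∈ ℤ^ℓ, and let j ∈ {1,…,ℓ} satisfy s_j < s_i − N for all i ≠ j. If λ is an ℓ-multipartition with |λ| ≤ N that is singular for the level-ℓ Uglov crystal with charges s, then the component λ^{(j)} is divisible by e, i.e., λ^{(j)} = eμ part-wise for some partition μ. -/

import Mathlib

/-- A partition: a weakly decreasing, eventually zero sequence of nonnegative integers.
`part k` is the `(k+1)`-st part, i.e. the length of row `k+1`. -/
structure Partn where
  part : ℕ → ℕ
  antitone : ∀ k, part (k + 1) ≤ part k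
  finite : ∃ N, ∀ k, N ≤ k → part k = 0

/-- The size `|λ| = Σ_k λ_k` of a partition (all parts beyond the chosen bound vanish). -/
noncomputable def Partn.size (p : Partn) : ℕ :=
  ∑ k ∈ Finset.range (Classical.choose p.finite), p.part k

/-- Row `k` (0-indexed) has an addable box at its end. -/
def AddableRow (p : Partn) (k : ℕ) : Prop :=
  k = 0 ∨ p.part k < p.part (k - 1)

/-- Row `k` (0-indexed) has a removable box at its end. -/
def RemovableRow (p : Partn) (k : ℕ) : Prop :=
  p.part (k + 1) < p.part k

/-- The shifted content `x - y + s_i` of the addable box `(part k + 1, k + 1)` in row `k`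
(0-indexed) of the `i`-th component. -/
def contA {ℓ : ℕ} (s : Fin ℓ → ℤ) (lam : Fin ℓ → Partn) (i : Fin ℓ) (k : ℕ) : ℤ :=
  ((lam i).part k : ℤ) - k + s i

/-- The shifted content `x - y + s_i` of the removable box `(part k, k + 1)` in row `k`
(0-indexed) of the `i`-th component. -/
def contR {ℓ : ℕ} (s : Fin ℓ → ℤ) (lam : Fin ℓ → Partn) (i : Fin ℓ) (k : ℕ) : ℤ :=
  ((lam i).part k : ℤ) - ((k : ℤ) + 1) + s i

/-- Uglov's ordering key `ℓ·cont(b) + e·i` of a box `b` in the `i`-th component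
(components numbered `1, …, ℓ`): boxes are listed in the signature in order of strictly
decreasing key. -/
def keyOf (e ℓ : ℕ) (c : ℤ) (i : Fin ℓ) : ℤ :=
  (ℓ : ℤ) * c + (e : ℤ) * ((i : ℕ) + 1)

open Classical in
/-- The letter of residue `z` and Uglov key `key` coming from component `i`:
`some true` ('+') for an addable box, `some false` ('−') for a removable box,
`none` if there is no such box. -/
noncomputable def letterAt (e ℓ : ℕ) (s : Fin ℓ → ℤ) (lam : Fin ℓ → Partn)
    (z : ZMod e) (key : ℤ) (i : Fin ℓ) : Option Bool :=
  if ∃ k, AddableRow (lam i) k ∧ ((contA s lam i k : ℤ) : ZMod e) = z ∧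
      keyOf e ℓ (contA s lam i k) i = key then some true
  else if ∃ k, RemovableRow (lam i) k ∧ ((contR s lam i k : ℤ) : ZMod e) = z ∧
      keyOf e ℓ (contR s lam i k) i = key then some false
  else none

/-- A bound such that every addable or removable box of `lam` has Uglov key of absolute
value at most `M e ℓ s lam`. -/
noncomputable def M (e ℓ : ℕ) (s : Fin ℓ → ℤ) (lam : Fin ℓ → Partn) : ℕ :=
  (ℓ + e) * ((∑ i : Fin ℓ,
    ((lam i).part 0 + Classical.choose (lam i).finite + (s i).natAbs + 2)) + ℓ + 2)

/-- The `z`-signature of the multipartition `lam`: all letters of residue `z`, listed in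
order of decreasing Uglov key `ℓ·cont(b) + e·i`. -/
noncomputable def word (e ℓ : ℕ) (s : Fin ℓ → ℤ) (lam : Fin ℓ → Partn) (z : ZMod e) :
    List Bool :=
  (List.range (2 * M e ℓ s lam + 1)).flatMap
    (fun t => (List.finRange ℓ).filterMap
      (fun i => letterAt e ℓ s lam z ((M e ℓ s lam : ℤ) - t) i))

/-- Repeatedly delete consecutive subwords `−+` (i.e. `false, true`) until none remain. -/
def reduce : List Bool → List Bool
  | [] => []
  | a :: w =>
    match a, reduce w with
    | false, true :: tail => tail
    | _, r => a :: r

lemma reduce_cons (a : Bool) (w : List Bool) :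
    reduce (a :: w) = match a, reduce w with
      | false, true :: tail => tail
      | _, r => a :: r := rfl

lemma reduce_true_cons (w : List Bool) : reduce (true :: w) = true :: reduce w := by
  rw [reduce_cons]

lemma reduce_false_cons (w : List Bool) :
    reduce (false :: w) = match reduce w with
      | true :: tail => tail
      | r => false :: r := by
  rw [reduce_cons]
  cases h : reduce w with
  | nil => rfl
  | cons b t => cases b <;> rfl

/-- balance: #true w + #false (reduce w) = #true (reduce w) + #false w -/
lemma reduce_balance (w : List Bool) :
    w.count true + (reduce w).count false = (reduce w).count true + w.count false := by
  induction w with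
  | nil => rfl
  | cons a w ih =>
    cases a with
    | true => rw [reduce_true_cons]; simp only [List.count_cons]; simp; omega
    | false =>
      rw [reduce_false_cons]
      cases h : reduce w with
      | nil => simp_all [List.count_cons]
      | cons b t =>
        cases b with
        | true => simp_all [List.count_cons]; omega
        | false => simp_all [List.count_cons]; omega

lemma count_false_reduce_cons (a : Bool) (w : List Bool) :
    (reduce w).count false ≤ (reduce (a :: w)).count false := by
  cases a with
  | true => rw [reduce_true_cons]; simp [List.count_cons]
  | false =>
    rw [reduce_false_cons]
    cases h : reduce w with
    | nil => simp
    | cons b t => cases b <;> simp [List.count_cons]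

lemma count_false_reduce_append (u v : List Bool) :
    (reduce v).count false ≤ (reduce (u ++ v)).count false := by
  induction u with
  | nil => simp
  | cons a u ih => exact le_trans ih (count_false_reduce_cons a (u ++ v))

/-- main suffix counting lemma -/
lemma count_le_of_not_false_reduce {u v : List Bool}
    (h : false ∉ reduce (u ++ v)) : v.count false ≤ v.count true := by
  have h0 : (reduce (u ++ v)).count false = 0 := List.count_eq_zero.2 h
  have h1 : (reduce v).count false = 0 :=
    Nat.le_antisymm (h0 ▸ count_false_reduce_append u v) (Nat.zero_le _)
  have := reduce_balance v
  omega
lemma cdsPartn_mono (p : Partn) : Antitone p.part :=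
  antitone_nat_of_succ_le p.antitone

lemma cdsPartn_part_eq_zero (p : Partn) {k : ℕ} (h : Classical.choose p.finite ≤ k) :
    p.part k = 0 := Classical.choose_spec p.finite k h

lemma cdsPartn_lt_bound (p : Partn) {k : ℕ} (h : 1 ≤ p.part k) :
    k < Classical.choose p.finite := by
  by_contra hc
  have := cdsPartn_part_eq_zero p (le_of_not_gt hc)
  omega

lemma cdsPartn_succ_le_size (p : Partn) {k : ℕ} (h : 1 ≤ p.part k) : k + 1 ≤ p.size := by
  have hD := cdsPartn_lt_bound p h
  calc k + 1 = ∑ t ∈ Finset.range (k+1), 1 := by simp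
  _ ≤ ∑ t ∈ Finset.range (k+1), p.part t := by
      apply Finset.sum_le_sum
      intro t ht
      simp only [Finset.mem_range] at ht
      exact le_trans h (cdsPartn_mono p (by omega))
  _ ≤ ∑ t ∈ Finset.range (Classical.choose p.finite), p.part t :=
      Finset.sum_le_sum_of_subset (Finset.range_subset_range.2 (by omega))
  _ = p.size := rfl

lemma cdsPartn_part_zero_le_size (p : Partn) : p.part 0 ≤ p.size := by
  rcases Nat.eq_zero_or_pos (p.part 0) with h | h
  · omega
  · have hD := cdsPartn_lt_bound p h
    calc p.part 0 = ∑ t ∈ Finset.range 1, p.part t := by simp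
    _ ≤ ∑ t ∈ Finset.range (Classical.choose p.finite), p.part t :=
        Finset.sum_le_sum_of_subset (Finset.range_subset_range.2 (by omega))
    _ = p.size := rfl

/-- the bead positions (beta-numbers shifted by the charge) -/
def bead (p : Partn) (σ : ℤ) (m : ℤ) : Prop := ∃ k : ℕ, (p.part k : ℤ) - k + σ = m

lemma beta_lt (p : Partn) (σ : ℤ) {k k' : ℕ} (h : k < k') :
    (p.part k' : ℤ) - k' + σ < (p.part k : ℤ) - k + σ := by
  have : StrictAnti (fun k : ℕ => (p.part k : ℤ) - k + σ) := by
    apply strictAnti_nat_of_succ_lt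
    intro n
    have := p.antitone n
    push_cast
    omega
  exact this h

lemma beta_le (p : Partn) (σ : ℤ) {k k' : ℕ} (h : k ≤ k') :
    (p.part k' : ℤ) - k' + σ ≤ (p.part k : ℤ) - k + σ := by
  rcases Nat.lt_or_ge k k' with h1 | h1
  · exact le_of_lt (beta_lt p σ h1)
  · have : k = k' := by omega
    subst this; exact le_refl _

lemma bead_of_le (p : Partn) (σ : ℤ) {m : ℤ}
    (h : m ≤ σ - ((Classical.choose p.finite : ℕ) : ℤ)) : bead p σ m := by
  refine ⟨(σ - m).toNat, ?_⟩
  have h1 : ((Classical.choose p.finite : ℕ) : ℤ) ≤ σ - m := by omega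
  have h0 : (0:ℤ) ≤ σ - m := le_trans (by positivity) h1
  have h2 : ((σ - m).toNat : ℤ) = σ - m := Int.toNat_of_nonneg h0
  have h3 : p.part (σ - m).toNat = 0 := cdsPartn_part_eq_zero p (by omega)
  rw [h3]
  push_cast
  omega

lemma not_bead_of_gt (p : Partn) (σ : ℤ) {m : ℤ} (h : (p.part 0 : ℤ) + σ < m) :
    ¬ bead p σ m := by
  rintro ⟨k, hk⟩
  have h1 := beta_le p σ (Nat.zero_le k)
  simp only [Nat.cast_zero] at h1
  omega

/-- addable boxes ↔ bead pattern (bead m, gap m+1) -/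
lemma plus_iff (p : Partn) (σ : ℤ) (m : ℤ) :
    (bead p σ m ∧ ¬ bead p σ (m+1)) ↔
      ∃ k, AddableRow p k ∧ (p.part k : ℤ) - k + σ = m := by
  constructor
  · rintro ⟨⟨k, hk⟩, hnb⟩
    refine ⟨k, ?_, hk⟩
    rcases Nat.eq_zero_or_pos k with rfl | hk0
    · exact Or.inl rfl
    · right
      by_contra hc
      have heq : p.part (k-1) = p.part k := by
        have := cdsPartn_mono p (Nat.sub_le k 1); omega
      apply hnb
      refine ⟨k-1, ?_⟩
      have hcast : ((k - 1 : ℕ) : ℤ) = (k : ℤ) - 1 := by omega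
      rw [heq, hcast]
      omega
  · rintro ⟨k, hadd, hk⟩
    refine ⟨⟨k, hk⟩, ?_⟩
    rintro ⟨k', hk'⟩
    have hkk : k' < k := by
      by_contra hc
      have := beta_le p σ (le_of_not_gt hc : k ≤ k')
      omega
    rcases hadd with h0 | hstep
    · omega
    · have hk1 : k' ≤ k - 1 := by omega
      have h2 := beta_le p σ hk1
      have hcast : ((k - 1 : ℕ) : ℤ) = (k : ℤ) - 1 := by omega
      rw [hcast] at h2
      omega

/-- removable boxes ↔ bead pattern (gap m, bead m+1) -/
lemma minus_iff (p : Partn) (σ : ℤ) (m : ℤ) :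
    (¬ bead p σ m ∧ bead p σ (m+1)) ↔
      ∃ k, RemovableRow p k ∧ (p.part k : ℤ) - ((k : ℤ) + 1) + σ = m := by
  constructor
  · rintro ⟨hnb, ⟨k, hk⟩⟩
    refine ⟨k, ?_, by omega⟩
    unfold RemovableRow
    by_contra hc
    have heq : p.part (k+1) = p.part k := by have := p.antitone k; omega
    exact hnb ⟨k+1, by rw [heq]; push_cast; omega⟩
  · rintro ⟨k, hrem, hk⟩
    unfold RemovableRow at hrem
    constructor
    · rintro ⟨k', hk'⟩
      have hkk : k < k' := by
        by_contra hc
        have := beta_le p σ (le_of_not_gt hc : k' ≤ k)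
        omega
      have h2 := beta_le p σ (show k + 1 ≤ k' by omega)
      push_cast at h2
      omega
    · exact ⟨k, by omega⟩
noncomputable def lowOf (p : Partn) (σ : ℤ) : ℤ := σ - ((Classical.choose p.finite : ℕ) : ℤ)

lemma bead_of_le_low (p : Partn) (σ : ℤ) {m : ℤ} (h : m ≤ lowOf p σ) : bead p σ m :=
  bead_of_le p σ h

open Classical in
noncomputable def Hgap (e : ℕ) (p : Partn) (σ : ℤ) (m : ℤ) : ℕ :=
  ((Finset.Icc (lowOf p σ) m).filter (fun c => (e:ℤ) ∣ (m - c) ∧ ¬ bead p σ c)).card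

open Classical in
lemma Hgap_step (e : ℕ) (he : 1 ≤ e) (p : Partn) (σ : ℤ) (m : ℤ) :
    Hgap e p σ m = Hgap e p σ (m - e) + (if bead p σ m then 0 else 1) := by
  classical
  have hdvd : ∀ c : ℤ, ((e:ℤ) ∣ (m - c)) ↔ ((e:ℤ) ∣ (m - e - c)) := by
    intro c
    constructor
    · rintro ⟨q, hq⟩
      exact ⟨q - 1, by rw [mul_sub, mul_one, ← hq]; ring⟩
    · rintro ⟨q, hq⟩
      exact ⟨q + 1, by rw [mul_add, mul_one, ← hq]; ring⟩
  by_cases hb : bead p σ m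
  · rw [if_pos hb]
    unfold Hgap
    have hset : (Finset.Icc (lowOf p σ) m).filter (fun c => (e:ℤ) ∣ (m - c) ∧ ¬ bead p σ c)
        = (Finset.Icc (lowOf p σ) (m - e)).filter
            (fun c => (e:ℤ) ∣ (m - e - c) ∧ ¬ bead p σ c) := by
      ext c
      simp only [Finset.mem_filter, Finset.mem_Icc]
      constructor
      · rintro ⟨⟨h1, h2⟩, h3, h4⟩
        have hne : c ≠ m := fun h => h4 (h ▸ hb)
        have hle : (e:ℤ) ≤ m - c := Int.le_of_dvd (by omega) h3
        exact ⟨⟨h1, by omega⟩, (hdvd c).1 h3, h4⟩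
      · rintro ⟨⟨h1, h2⟩, h3, h4⟩
        exact ⟨⟨h1, by omega⟩, (hdvd c).2 h3, h4⟩
    rw [hset]
    omega
  · rw [if_neg hb]
    unfold Hgap
    have hlow : lowOf p σ ≤ m := by
      by_contra hc
      exact hb (bead_of_le_low p σ (by omega))
    have hset : (Finset.Icc (lowOf p σ) m).filter (fun c => (e:ℤ) ∣ (m - c) ∧ ¬ bead p σ c)
        = insert m ((Finset.Icc (lowOf p σ) (m - e)).filter
            (fun c => (e:ℤ) ∣ (m - e - c) ∧ ¬ bead p σ c)) := by
      ext c
      simp only [Finset.mem_filter, Finset.mem_Icc, Finset.mem_insert]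
      constructor
      · rintro ⟨⟨h1, h2⟩, h3, h4⟩
        by_cases hc : c = m
        · exact Or.inl hc
        · right
          have hle : (e:ℤ) ≤ m - c := Int.le_of_dvd (by omega) h3
          exact ⟨⟨h1, by omega⟩, (hdvd c).1 h3, h4⟩
      · intro hmem
        rcases hmem with hc | ⟨⟨h1, h2⟩, h3, h4⟩
        · subst hc
          exact ⟨⟨hlow, le_refl _⟩, by simp, hb⟩
        · exact ⟨⟨h1, by omega⟩, (hdvd c).2 h3, h4⟩
    rw [hset, Finset.card_insert_of_notMem (by
      simp only [Finset.mem_filter, Finset.mem_Icc]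
      rintro ⟨⟨h1, h2⟩, h3, h4⟩
      omega)]

lemma Hgap_eq_zero (e : ℕ) (p : Partn) (σ : ℤ) {m : ℤ} (h : m < lowOf p σ) :
    Hgap e p σ m = 0 := by
  classical
  unfold Hgap
  rw [Finset.card_eq_zero]
  apply Finset.filter_eq_empty_iff.2
  intro c hc
  simp only [Finset.mem_Icc] at hc
  omega

open Classical in
/-- the pairing identity: H(m+1) + Minus(m) = H(m) + Plus(m) -/
lemma Hgap_pair (e : ℕ) (he : 1 ≤ e) (p : Partn) (σ : ℤ) (m : ℤ) :
    Hgap e p σ (m+1) +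
      ((Finset.Icc (lowOf p σ) m).filter
        (fun c => (e:ℤ) ∣ (m - c) ∧ ¬ bead p σ c ∧ bead p σ (c+1))).card
    = Hgap e p σ m +
      ((Finset.Icc (lowOf p σ) m).filter
        (fun c => (e:ℤ) ∣ (m - c) ∧ bead p σ c ∧ ¬ bead p σ (c+1))).card := by
  classical
  have hH1 : Hgap e p σ (m+1) =
      ((Finset.Icc (lowOf p σ) m).filter
        (fun c => (e:ℤ) ∣ (m - c) ∧ ¬ bead p σ (c+1))).card := by
    unfold Hgap
    symm
    apply Finset.card_bij' (fun (c : ℤ) _ => c + 1) (fun (c : ℤ) _ => c - 1)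
    · intro c hc
      simp only [Finset.mem_filter, Finset.mem_Icc] at hc ⊢
      obtain ⟨⟨h1, h2⟩, h3, h4⟩ := hc
      refine ⟨⟨by omega, by omega⟩, ?_, h4⟩
      have hh : m + 1 - (c + 1) = m - c := by ring
      rw [hh]; exact h3
    · intro c hc
      simp only [Finset.mem_filter, Finset.mem_Icc] at hc ⊢
      obtain ⟨⟨h1, h2⟩, h3, h4⟩ := hc
      have hne : c ≠ lowOf p σ := by
        intro h; exact h4 (bead_of_le_low p σ (le_of_eq h))
      have hh : m - (c - 1) = m + 1 - c := by ring
      have hh2 : c - 1 + 1 = c := by ring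
      refine ⟨⟨by omega, by omega⟩, ?_, ?_⟩
      · rw [hh]; exact h3
      · rw [hh2]; exact h4
    · intro c hc; omega
    · intro c hc; omega
  rw [hH1]
  unfold Hgap
  rw [Finset.card_filter, Finset.card_filter, Finset.card_filter, Finset.card_filter,
    ← Finset.sum_add_distrib, ← Finset.sum_add_distrib]
  apply Finset.sum_congr rfl
  intro c _
  by_cases hd : (e:ℤ) ∣ m - c <;> by_cases h1 : bead p σ c <;> by_cases h2 : bead p σ (c+1) <;>
    simp [hd, h1, h2]

lemma tele_sum (f : ℤ → ℕ) (a : ℤ) (n : ℕ) (hm : ∀ q : ℕ, q < n → f (a + q) ≤ f (a + q + 1)) :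
    f (a + n) = f a + ∑ q ∈ Finset.range n, (f (a + q + 1) - f (a + q)) := by
  induction n with
  | zero => simp
  | succ n ih =>
    rw [Finset.sum_range_succ]
    have h1 := ih (fun q hq => hm q (by omega))
    have h2 := hm n (by omega)
    have hc : a + ((n : ℕ) + 1 : ℕ) = a + (n : ℕ) + 1 := by push_cast; ring
    rw [hc]
    omega
lemma count_toList (o : Option Bool) (b : Bool) :
    (o.toList).count b = if o = some b then 1 else 0 := by
  cases o with
  | none => simp
  | some c => cases c <;> cases b <;> decide

lemma filterMap_eq_of_none {α β : Type*} (f : α → Option β) (j : α) :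
    ∀ (l : List α), l.Nodup → j ∈ l → (∀ i ∈ l, i ≠ j → f i = none) →
      l.filterMap f = (f j).toList := by
  intro l
  induction l with
  | nil => intro _ h; simp at h
  | cons a l ih =>
    intro hnd hmem hnone
    rcases List.mem_cons.1 hmem with heq | hmem'
    · have haj : a = j := heq.symm
      have hjl : j ∉ l := by rw [← haj]; exact (List.nodup_cons.1 hnd).1
      have hl : l.filterMap f = [] := List.filterMap_eq_nil_iff.2
        (fun i hi => hnone i (List.mem_cons_of_mem _ hi) (fun h => hjl (h ▸ hi)))
      rw [List.filterMap_cons, hl, haj]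
      cases f j <;> simp
    · have hane : a ≠ j := by
        intro h
        exact (List.nodup_cons.1 hnd).1 (h ▸ hmem')
      have hfa : f a = none := hnone a List.mem_cons_self hane
      rw [List.filterMap_cons, hfa]
      exact ih (List.nodup_cons.1 hnd).2 hmem'
        (fun i hi hij => hnone i (List.mem_cons_of_mem _ hi) hij)

lemma count_flatMap_range' (W : ℕ → List Bool) (b : Bool) :
    ∀ (n a : ℕ), ((List.range' a n).flatMap W).count b
      = ∑ x ∈ Finset.range n, (W (a + x)).count b := by
  intro n
  induction n with
  | zero => intro a; simp
  | succ n ih =>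
    intro a
    rw [List.range'_succ, List.flatMap_cons, List.count_append, Finset.sum_range_succ']
    rw [ih (a+1)]
    simp only [Nat.add_zero]
    rw [Nat.add_comm]
    congr 1
    apply Finset.sum_congr rfl
    intro x _
    have hx : a + 1 + x = a + (x + 1) := by omega
    rw [hx]

lemma contA_lb {ℓ : ℕ} (s : Fin ℓ → ℤ) (lam : Fin ℓ → Partn) (i : Fin ℓ) (k : ℕ)
    (h : AddableRow (lam i) k) : s i - ((lam i).size : ℤ) ≤ contA s lam i k := by
  unfold contA
  have hsz : (0:ℤ) ≤ ((lam i).size : ℤ) := by positivity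
  rcases h with h0 | hlt
  · subst h0
    have : (0:ℤ) ≤ ((lam i).part 0 : ℤ) := by positivity
    push_cast
    omega
  · rcases Nat.eq_zero_or_pos k with rfl | hk0
    · exact absurd hlt (lt_irrefl _)
    · have h1 : 1 ≤ (lam i).part (k-1) := by omega
      have h2 := cdsPartn_succ_le_size (lam i) h1
      have h3 : k - 1 + 1 = k := by omega
      rw [h3] at h2
      push_cast
      omega

lemma contR_lb {ℓ : ℕ} (s : Fin ℓ → ℤ) (lam : Fin ℓ → Partn) (i : Fin ℓ) (k : ℕ)
    (h : RemovableRow (lam i) k) : s i - ((lam i).size : ℤ) ≤ contR s lam i k := by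
  unfold contR
  unfold RemovableRow at h
  have h1 : 1 ≤ (lam i).part k := by omega
  have h2 := cdsPartn_succ_le_size (lam i) h1
  push_cast
  omega

lemma two_size_le {ℓ : ℕ} (lam : Fin ℓ → Partn) {N : ℕ}
    (hsize : ∑ i : Fin ℓ, (lam i).size ≤ N) {i j : Fin ℓ} (hij : i ≠ j) :
    (lam i).size + (lam j).size ≤ N := by
  calc (lam i).size + (lam j).size
      = ∑ x ∈ ({i, j} : Finset (Fin ℓ)), (lam x).size := (Finset.sum_pair (f := fun x => (lam x).size) hij).symm
    _ ≤ ∑ x : Fin ℓ, (lam x).size :=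
        Finset.sum_le_sum_of_subset (Finset.subset_univ _)
    _ ≤ N := hsize

/-- purity: letters of residue `m mod e` at keys `≤ keyOf m j` only come from component `j` -/
lemma letter_none (e ℓ : ℕ) (he : 1 ≤ e) (s : Fin ℓ → ℤ) (j : Fin ℓ)
    (N : ℕ) (hs : ∀ i : Fin ℓ, i ≠ j → s j < s i - (N : ℤ)) (lam : Fin ℓ → Partn)
    (hsize : ∑ i : Fin ℓ, (lam i).size ≤ N)
    (m : ℤ) (hm : m ≤ s j + ((lam j).part 0 : ℤ)) (x : ℕ) (i : Fin ℓ) (hij : i ≠ j) :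
    letterAt e ℓ s lam ((m : ZMod e)) (keyOf e ℓ m j - x) i = none := by
  have hsum := two_size_le lam hsize hij
  have hs' := hs i hij
  have hp0 : ((lam j).part 0 : ℤ) ≤ ((lam j).size : ℤ) := by
    exact_mod_cast cdsPartn_part_zero_le_size (lam j)
  have hcore : ∀ c : ℤ, s i - ((lam i).size : ℤ) ≤ c → ((c : ZMod e) = (m : ZMod e)) →
      keyOf e ℓ c i = keyOf e ℓ m j - x → False := by
    intro c hlb hres hkey
    have hdvd : (e:ℤ) ∣ m - c := (ZMod.intCast_eq_intCast_iff_dvd_sub c m e).1 hres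
    have hmc : m < c := by omega
    have hdvd' : (e:ℤ) ∣ c - m := by
      have h' : c - m = -(m - c) := by ring
      rw [h']; exact dvd_neg.2 hdvd
    have hce : (e:ℤ) ≤ c - m := Int.le_of_dvd (by omega) hdvd'
    unfold keyOf at hkey
    have hj1 : ((j:ℕ):ℤ) + 1 ≤ (ℓ:ℤ) := by
      have := j.isLt; omega
    have hi1 : (1:ℤ) ≤ ((i:ℕ):ℤ) + 1 := by omega
    have hx : (0:ℤ) ≤ (x:ℤ) := by positivity
    have h1 : (ℓ:ℤ) * e ≤ (ℓ:ℤ) * (c - m) := by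
      apply mul_le_mul_of_nonneg_left hce (by positivity)
    have h2 : (e:ℤ) * (((j:ℕ):ℤ)+1) ≤ (e:ℤ) * ℓ := by
      apply mul_le_mul_of_nonneg_left hj1 (by positivity)
    have h3 : (e:ℤ) * 1 ≤ (e:ℤ) * (((i:ℕ):ℤ)+1) := by
      apply mul_le_mul_of_nonneg_left hi1 (by positivity)
    have hexp : (ℓ:ℤ) * (c - m) = (ℓ:ℤ)*c - (ℓ:ℤ)*m := by ring
    have hcomm : (ℓ:ℤ)*(e:ℤ) = (e:ℤ)*(ℓ:ℤ) := mul_comm _ _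
    have he' : (1:ℤ) ≤ (e:ℤ) := by exact_mod_cast he
    linarith
  unfold letterAt
  rw [if_neg, if_neg]
  · rintro ⟨k, hrow, hres, hkey⟩
    exact hcore _ (contR_lb s lam i k hrow) hres hkey
  · rintro ⟨k, hrow, hres, hkey⟩
    exact hcore _ (contA_lb s lam i k hrow) hres hkey

lemma letterAt_j_true_iff (e ℓ : ℕ) (s : Fin ℓ → ℤ) (lam : Fin ℓ → Partn) (j : Fin ℓ)
    (z : ZMod e) (key : ℤ) :
    letterAt e ℓ s lam z key j = some true ↔
      ∃ c : ℤ, keyOf e ℓ c j = key ∧ ((c : ZMod e) = z) ∧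
        bead (lam j) (s j) c ∧ ¬ bead (lam j) (s j) (c+1) := by
  constructor
  · intro h
    unfold letterAt at h
    split_ifs at h with h1 h2 <;>
      first
        | (obtain ⟨k, hrow, hres, hkey⟩ := h1
           exact ⟨contA s lam j k, hkey, hres,
             (plus_iff (lam j) (s j) (contA s lam j k)).2 ⟨k, hrow, rfl⟩⟩)
        | cases h
  · rintro ⟨c, hkey, hres, hbead⟩
    have h1 : ∃ k, AddableRow (lam j) k ∧ ((contA s lam j k : ℤ) : ZMod e) = z ∧
        keyOf e ℓ (contA s lam j k) j = key := by
      obtain ⟨k, hrow, hk⟩ := (plus_iff (lam j) (s j) c).1 hbead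
      have hc : contA s lam j k = c := hk
      exact ⟨k, hrow, by rw [hc]; exact hres, by rw [hc]; exact hkey⟩
    unfold letterAt
    rw [if_pos h1]

lemma letterAt_j_false_iff (e ℓ : ℕ) (hℓ : 1 ≤ ℓ) (s : Fin ℓ → ℤ) (lam : Fin ℓ → Partn)
    (j : Fin ℓ) (z : ZMod e) (key : ℤ) :
    letterAt e ℓ s lam z key j = some false ↔
      ∃ c : ℤ, keyOf e ℓ c j = key ∧ ((c : ZMod e) = z) ∧
        ¬ bead (lam j) (s j) c ∧ bead (lam j) (s j) (c+1) := by
  constructor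
  · intro h
    unfold letterAt at h
    split_ifs at h with h1 h2 <;>
      first
        | (obtain ⟨k, hrow, hres, hkey⟩ := h2
           exact ⟨contR s lam j k, hkey, hres,
             (minus_iff (lam j) (s j) (contR s lam j k)).2 ⟨k, hrow, rfl⟩⟩)
        | cases h
  · rintro ⟨c, hkey, hres, hbead⟩
    have h2 : ∃ k, RemovableRow (lam j) k ∧ ((contR s lam j k : ℤ) : ZMod e) = z ∧
        keyOf e ℓ (contR s lam j k) j = key := by
      obtain ⟨k, hrow, hk⟩ := (minus_iff (lam j) (s j) c).1 hbead
      have hc : contR s lam j k = c := hk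
      exact ⟨k, hrow, by rw [hc]; exact hres, by rw [hc]; exact hkey⟩
    have h1 : ¬ ∃ k, AddableRow (lam j) k ∧ ((contA s lam j k : ℤ) : ZMod e) = z ∧
        keyOf e ℓ (contA s lam j k) j = key := by
      rintro ⟨k, hrow, hres', hkey'⟩
      have hplus := (plus_iff (lam j) (s j) (contA s lam j k)).2 ⟨k, hrow, rfl⟩
      have hkk : keyOf e ℓ (contA s lam j k) j = keyOf e ℓ c j := hkey'.trans hkey.symm
      unfold keyOf at hkk
      have hl0 : (0:ℤ) < (ℓ:ℤ) := by exact_mod_cast hℓ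
      have hceq : contA s lam j k = c := by
        apply mul_left_cancel₀ (ne_of_gt hl0)
        linarith
      rw [hceq] at hplus
      exact hbead.1 hplus.1
    unfold letterAt
    rw [if_neg h1, if_pos h2]

lemma key_bound (e ℓ : ℕ) (he : 1 ≤ e) (hℓ : 1 ≤ ℓ) (s : Fin ℓ → ℤ) (lam : Fin ℓ → Partn)
    (j : Fin ℓ) (c : ℤ) (h1 : lowOf (lam j) (s j) - e - 1 ≤ c)
    (h2 : c ≤ s j + ((lam j).part 0 : ℤ) + 1) :
    -(M e ℓ s lam : ℤ) ≤ keyOf e ℓ c j ∧ keyOf e ℓ c j ≤ (M e ℓ s lam : ℤ) := by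
  have hTj : (lam j).part 0 + Classical.choose (lam j).finite + (s j).natAbs + 2 ≤
      ∑ i : Fin ℓ, ((lam i).part 0 + Classical.choose (lam i).finite + (s i).natAbs + 2) :=
    Finset.single_le_sum
      (f := fun i => (lam i).part 0 + Classical.choose (lam i).finite + (s i).natAbs + 2)
      (fun i _ => Nat.zero_le _) (Finset.mem_univ j)
  set T : ℕ := ∑ i : Fin ℓ, ((lam i).part 0 + Classical.choose (lam i).finite + (s i).natAbs + 2)
    with hTdef
  have hM : (M e ℓ s lam : ℤ)
      = (ℓ:ℤ) * T + (e:ℤ) * T + (ℓ:ℤ) * ℓ + (e:ℤ) * ℓ + 2*(ℓ:ℤ) + 2*(e:ℤ) := by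
    unfold M
    rw [← hTdef]
    push_cast
    ring
  set A : ℤ := ((lam j).part 0 : ℤ) + ((Classical.choose (lam j).finite : ℕ) : ℤ)
    + ((s j).natAbs : ℤ) + 2 with hAdef
  have hAT : A ≤ (T:ℤ) := by
    rw [hAdef]
    exact_mod_cast hTj
  have habs1 : s j ≤ ((s j).natAbs : ℤ) := Int.le_natAbs
  have habs2 : -(((s j).natAbs : ℤ)) ≤ s j := by
    rw [← Int.abs_eq_natAbs]
    exact neg_abs_le _
  have hc_up : c ≤ A := by rw [hAdef]; omega
  have hc_lo : -A - e ≤ c := by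
    unfold lowOf at h1
    rw [hAdef]
    omega
  have hj1 : ((j:ℕ):ℤ) + 1 ≤ (ℓ:ℤ) := by have := j.isLt; omega
  have hj0 : (1:ℤ) ≤ ((j:ℕ):ℤ) + 1 := by omega
  have hkey : keyOf e ℓ c j = (ℓ:ℤ)*c + (e:ℤ)*(((j:ℕ):ℤ)+1) := rfl
  have hl0 : (0:ℤ) ≤ (ℓ:ℤ) := by positivity
  have he0 : (0:ℤ) ≤ (e:ℤ) := by positivity
  have hT0 : (0:ℤ) ≤ (T:ℤ) := by positivity
  have hcomm : (ℓ:ℤ)*(e:ℤ) = (e:ℤ)*(ℓ:ℤ) := mul_comm _ _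
  have m3 : (ℓ:ℤ)*A ≤ (ℓ:ℤ)*T := mul_le_mul_of_nonneg_left hAT hl0
  have m5 : (0:ℤ) ≤ (e:ℤ)*T := mul_nonneg he0 hT0
  have m6 : (0:ℤ) ≤ (ℓ:ℤ)*(ℓ:ℤ) := mul_nonneg hl0 hl0
  constructor
  · have m1 : (ℓ:ℤ)*(-A - e) ≤ (ℓ:ℤ) * c := mul_le_mul_of_nonneg_left hc_lo hl0
    have m4 : (ℓ:ℤ)*(-A - e) = -((ℓ:ℤ)*A) - (ℓ:ℤ)*(e:ℤ) := by ring
    have m2 : (0:ℤ) ≤ (e:ℤ) * (((j:ℕ):ℤ)+1) :=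
      mul_nonneg he0 (by positivity)
    rw [hkey, hM]
    linarith
  · have m1 : (ℓ:ℤ)*c ≤ (ℓ:ℤ)*A := mul_le_mul_of_nonneg_left hc_up hl0
    have m2 : (e:ℤ)*(((j:ℕ):ℤ)+1) ≤ (e:ℤ)*(ℓ:ℤ) := mul_le_mul_of_nonneg_left hj1 he0
    rw [hkey, hM]
    linarith
open Classical in
lemma card_plus (e ℓ : ℕ) (he : 1 ≤ e) (hℓ : 1 ≤ ℓ) (s : Fin ℓ → ℤ)
    (j : Fin ℓ) (lam : Fin ℓ → Partn)
    (m : ℤ) (hm : m ≤ s j + ((lam j).part 0 : ℤ)) (hlowm : lowOf (lam j) (s j) ≤ m)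
    (t₁ n₂ : ℕ) (ht1 : (t₁:ℤ) = (M e ℓ s lam : ℤ) - keyOf e ℓ m j)
    (hn2 : t₁ + n₂ = 2 * M e ℓ s lam + 1) :
    ((Finset.Icc (lowOf (lam j) (s j)) m).filter
        (fun c => (e:ℤ) ∣ (m - c) ∧ bead (lam j) (s j) c ∧ ¬ bead (lam j) (s j) (c+1))).card
    = ((Finset.range n₂).filter
        (fun x : ℕ => letterAt e ℓ s lam (m : ZMod e) (keyOf e ℓ m j - (x:ℤ)) j = some true)).card := by
  classical
  have hl0 : (0:ℤ) < (ℓ:ℤ) := by exact_mod_cast hℓ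
  apply Finset.card_bij (fun c _ => ((ℓ:ℤ) * (m - c)).toNat)
  · intro c hc
    simp only [Finset.mem_filter, Finset.mem_Icc] at hc
    obtain ⟨⟨hc1, hc2⟩, hdvd, hP⟩ := hc
    have hnn : (0:ℤ) ≤ (ℓ:ℤ) * (m - c) := mul_nonneg (by positivity) (by omega)
    have htn : ((((ℓ:ℤ) * (m - c)).toNat : ℕ) : ℤ) = (ℓ:ℤ) * (m - c) := Int.toNat_of_nonneg hnn
    have hkeyc : keyOf e ℓ c j = keyOf e ℓ m j - (ℓ:ℤ) * (m - c) := by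
      unfold keyOf; ring
    have hKc := key_bound e ℓ he hℓ s lam j c (by omega) (by omega)
    simp only [Finset.mem_filter, Finset.mem_range]
    constructor
    · have hstep : (t₁:ℤ) + ((ℓ:ℤ)*(m - c)) ≤ 2 * (M e ℓ s lam : ℤ) := by
        rw [ht1]
        have hK1 := hKc.1
        linarith [hkeyc]
      omega
    · apply (letterAt_j_true_iff e ℓ s lam j _ _).2
      refine ⟨c, ?_, (ZMod.intCast_eq_intCast_iff_dvd_sub c m e).2 hdvd, hP⟩
      rw [htn, ← hkeyc]
  · intro c1 h1 c2 h2 heq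
    simp only [Finset.mem_filter, Finset.mem_Icc] at h1 h2
    have hnn1 : (0:ℤ) ≤ (ℓ:ℤ) * (m - c1) := mul_nonneg (by positivity) (by omega)
    have hnn2 : (0:ℤ) ≤ (ℓ:ℤ) * (m - c2) := mul_nonneg (by positivity) (by omega)
    have heq' : (ℓ:ℤ) * (m - c1) = (ℓ:ℤ) * (m - c2) := by
      have e1 := Int.toNat_of_nonneg hnn1
      have e2 := Int.toNat_of_nonneg hnn2
      rw [heq] at e1
      omega
    have := mul_left_cancel₀ (ne_of_gt hl0) heq'
    omega
  · intro x hx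
    simp only [Finset.mem_filter, Finset.mem_range] at hx
    obtain ⟨hxn, hlet⟩ := hx
    obtain ⟨c, hkeyc, hres, hP⟩ := (letterAt_j_true_iff e ℓ s lam j _ _).1 hlet
    have hkeyc' : (ℓ:ℤ) * (m - c) = (x:ℤ) := by
      unfold keyOf at hkeyc
      have hexp : (ℓ:ℤ)*(m - c) = (ℓ:ℤ)*m - (ℓ:ℤ)*c := by ring
      linarith
    have hx0 : (0:ℤ) ≤ (x:ℤ) := by positivity
    have hmc : (0:ℤ) ≤ m - c := by
      by_contra hcon
      push_neg at hcon
      have h2 : (ℓ:ℤ)*(m - c) ≤ (ℓ:ℤ)*(-1) := mul_le_mul_of_nonneg_left (by omega) (by positivity)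
      have h3 : (ℓ:ℤ)*(-1) = -(ℓ:ℤ) := by ring
      linarith
    have hclow : lowOf (lam j) (s j) ≤ c := by
      by_contra hcon
      push_neg at hcon
      exact hP.2 (bead_of_le_low (lam j) (s j) (by omega))
    refine ⟨c, ?_, ?_⟩
    · simp only [Finset.mem_filter, Finset.mem_Icc]
      exact ⟨⟨hclow, by omega⟩, (ZMod.intCast_eq_intCast_iff_dvd_sub c m e).1 hres, hP⟩
    · omega

open Classical in
lemma card_minus (e ℓ : ℕ) (he : 1 ≤ e) (hℓ : 1 ≤ ℓ) (s : Fin ℓ → ℤ)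
    (j : Fin ℓ) (lam : Fin ℓ → Partn)
    (m : ℤ) (hm : m ≤ s j + ((lam j).part 0 : ℤ)) (hlowm : lowOf (lam j) (s j) ≤ m)
    (t₁ n₂ : ℕ) (ht1 : (t₁:ℤ) = (M e ℓ s lam : ℤ) - keyOf e ℓ m j)
    (hn2 : t₁ + n₂ = 2 * M e ℓ s lam + 1) :
    ((Finset.Icc (lowOf (lam j) (s j)) m).filter
        (fun c => (e:ℤ) ∣ (m - c) ∧ ¬ bead (lam j) (s j) c ∧ bead (lam j) (s j) (c+1))).card
    = ((Finset.range n₂).filter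
        (fun x : ℕ => letterAt e ℓ s lam (m : ZMod e) (keyOf e ℓ m j - (x:ℤ)) j = some false)).card := by
  classical
  have hl0 : (0:ℤ) < (ℓ:ℤ) := by exact_mod_cast hℓ
  apply Finset.card_bij (fun c _ => ((ℓ:ℤ) * (m - c)).toNat)
  · intro c hc
    simp only [Finset.mem_filter, Finset.mem_Icc] at hc
    obtain ⟨⟨hc1, hc2⟩, hdvd, hP⟩ := hc
    have hnn : (0:ℤ) ≤ (ℓ:ℤ) * (m - c) := mul_nonneg (by positivity) (by omega)
    have htn : ((((ℓ:ℤ) * (m - c)).toNat : ℕ) : ℤ) = (ℓ:ℤ) * (m - c) := Int.toNat_of_nonneg hnn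
    have hkeyc : keyOf e ℓ c j = keyOf e ℓ m j - (ℓ:ℤ) * (m - c) := by
      unfold keyOf; ring
    have hKc := key_bound e ℓ he hℓ s lam j c (by omega) (by omega)
    simp only [Finset.mem_filter, Finset.mem_range]
    constructor
    · have hstep : (t₁:ℤ) + ((ℓ:ℤ)*(m - c)) ≤ 2 * (M e ℓ s lam : ℤ) := by
        rw [ht1]
        have hK1 := hKc.1
        linarith [hkeyc]
      omega
    · apply (letterAt_j_false_iff e ℓ hℓ s lam j _ _).2
      refine ⟨c, ?_, (ZMod.intCast_eq_intCast_iff_dvd_sub c m e).2 hdvd, hP⟩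
      rw [htn, ← hkeyc]
  · intro c1 h1 c2 h2 heq
    simp only [Finset.mem_filter, Finset.mem_Icc] at h1 h2
    have hnn1 : (0:ℤ) ≤ (ℓ:ℤ) * (m - c1) := mul_nonneg (by positivity) (by omega)
    have hnn2 : (0:ℤ) ≤ (ℓ:ℤ) * (m - c2) := mul_nonneg (by positivity) (by omega)
    have heq' : (ℓ:ℤ) * (m - c1) = (ℓ:ℤ) * (m - c2) := by
      have e1 := Int.toNat_of_nonneg hnn1
      have e2 := Int.toNat_of_nonneg hnn2
      rw [heq] at e1
      omega
    have := mul_left_cancel₀ (ne_of_gt hl0) heq'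
    omega
  · intro x hx
    simp only [Finset.mem_filter, Finset.mem_range] at hx
    obtain ⟨hxn, hlet⟩ := hx
    obtain ⟨c, hkeyc, hres, hP⟩ := (letterAt_j_false_iff e ℓ hℓ s lam j _ _).1 hlet
    have hkeyc' : (ℓ:ℤ) * (m - c) = (x:ℤ) := by
      unfold keyOf at hkeyc
      have hexp : (ℓ:ℤ)*(m - c) = (ℓ:ℤ)*m - (ℓ:ℤ)*c := by ring
      linarith
    have hx0 : (0:ℤ) ≤ (x:ℤ) := by positivity
    have hmc : (0:ℤ) ≤ m - c := by
      by_contra hcon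
      push_neg at hcon
      have h2 : (ℓ:ℤ)*(m - c) ≤ (ℓ:ℤ)*(-1) := mul_le_mul_of_nonneg_left (by omega) (by positivity)
      have h3 : (ℓ:ℤ)*(-1) = -(ℓ:ℤ) := by ring
      linarith
    have hclow : lowOf (lam j) (s j) ≤ c := by
      by_contra hcon
      push_neg at hcon
      exact hP.1 (bead_of_le_low (lam j) (s j) (by omega))
    refine ⟨c, ?_, ?_⟩
    · simp only [Finset.mem_filter, Finset.mem_Icc]
      exact ⟨⟨hclow, by omega⟩, (ZMod.intCast_eq_intCast_iff_dvd_sub c m e).1 hres, hP⟩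
    · omega
open Classical in
lemma hgap_mono (e ℓ : ℕ) (he : 1 ≤ e) (hℓ : 1 ≤ ℓ) (N : ℕ) (s : Fin ℓ → ℤ) (j : Fin ℓ)
    (hs : ∀ i : Fin ℓ, i ≠ j → s j < s i - (N : ℤ)) (lam : Fin ℓ → Partn)
    (hsize : ∑ i : Fin ℓ, (lam i).size ≤ N)
    (hsing : ∀ z : ZMod e, false ∉ reduce (word e ℓ s lam z))
    (m : ℤ) (hm : m ≤ s j + ((lam j).part 0 : ℤ)) :
    Hgap e (lam j) (s j) m ≤ Hgap e (lam j) (s j) (m+1) := by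
  classical
  by_cases hlowm : m < lowOf (lam j) (s j)
  · rw [Hgap_eq_zero e (lam j) (s j) hlowm]
    exact Nat.zero_le _
  push_neg at hlowm
  obtain ⟨hKlo, hKup⟩ := key_bound e ℓ he hℓ s lam j m (by omega) (by omega)
  obtain ⟨t₁, ht1⟩ : ∃ t : ℕ, (t:ℤ) = (M e ℓ s lam : ℤ) - keyOf e ℓ m j :=
    ⟨((M e ℓ s lam : ℤ) - keyOf e ℓ m j).toNat, Int.toNat_of_nonneg (by omega)⟩
  obtain ⟨n₂, hn2⟩ : ∃ n : ℕ, t₁ + n = 2 * M e ℓ s lam + 1 :=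
    ⟨2 * M e ℓ s lam + 1 - t₁, by omega⟩
  -- split the word
  have hword : word e ℓ s lam (m : ZMod e)
      = (List.range' 0 t₁).flatMap
          (fun t : ℕ => (List.finRange ℓ).filterMap
            (fun i => letterAt e ℓ s lam (m : ZMod e) ((M e ℓ s lam : ℤ) - t) i))
        ++ (List.range' t₁ n₂).flatMap
          (fun t : ℕ => (List.finRange ℓ).filterMap
            (fun i => letterAt e ℓ s lam (m : ZMod e) ((M e ℓ s lam : ℤ) - t) i)) := by
    unfold word
    rw [show 2 * M e ℓ s lam + 1 = n₂ + t₁ by omega]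
    rw [List.range_eq_range', Nat.add_comm n₂ t₁, ← List.range'_append_1 (s := 0) (m := t₁) (n := n₂), Nat.zero_add]
    simp [List.flatMap_append, List.flatMap_assoc]
  have hfle := count_le_of_not_false_reduce (hword ▸ hsing (m : ZMod e))
  -- identify the letters in the suffix
  have hWx : ∀ x : ℕ,
      (List.finRange ℓ).filterMap
          (fun i => letterAt e ℓ s lam (m : ZMod e) ((M e ℓ s lam : ℤ) - ((t₁ + x : ℕ) : ℤ)) i)
        = (letterAt e ℓ s lam (m : ZMod e) (keyOf e ℓ m j - (x : ℤ)) j).toList := by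
    intro x
    have hkeyx : (M e ℓ s lam : ℤ) - ((t₁ + x : ℕ) : ℤ) = keyOf e ℓ m j - (x : ℤ) := by
      push_cast
      omega
    rw [hkeyx]
    exact filterMap_eq_of_none _ j _ (List.nodup_finRange ℓ) (List.mem_finRange j)
      (fun i _ hij => letter_none e ℓ he s j N hs lam hsize m hm x i hij)
  have hScount : ∀ b : Bool,
      ((List.range' t₁ n₂).flatMap
          (fun t : ℕ => (List.finRange ℓ).filterMap
            (fun i => letterAt e ℓ s lam (m : ZMod e) ((M e ℓ s lam : ℤ) - t) i))).count b
      = ((Finset.range n₂).filter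
          (fun x : ℕ => letterAt e ℓ s lam (m : ZMod e) (keyOf e ℓ m j - (x:ℤ)) j = some b)).card := by
    intro b
    rw [count_flatMap_range', Finset.card_filter]
    apply Finset.sum_congr rfl
    intro x _
    rw [hWx x, count_toList]
  rw [hScount true, hScount false] at hfle
  have hplus := card_plus e ℓ he hℓ s j lam m hm hlowm t₁ n₂ ht1 hn2
  have hminus := card_minus e ℓ he hℓ s j lam m hm hlowm t₁ n₂ ht1 hn2
  have hpair := Hgap_pair e he (lam j) (s j) m
  omega
lemma dvd_parts (e ℓ : ℕ) (he : 1 ≤ e) (hℓ : 1 ≤ ℓ) (N : ℕ) (s : Fin ℓ → ℤ) (j : Fin ℓ)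
    (hs : ∀ i : Fin ℓ, i ≠ j → s j < s i - (N : ℤ)) (lam : Fin ℓ → Partn)
    (hsize : ∑ i : Fin ℓ, (lam i).size ≤ N)
    (hsing : ∀ z : ZMod e, false ∉ reduce (word e ℓ s lam z)) (k : ℕ) :
    (e:ℤ) ∣ (((lam j).part k : ℤ) - ((lam j).part (k+1) : ℤ)) := by
  classical
  have hmono : ∀ m : ℤ, m ≤ s j + ((lam j).part 0 : ℤ) →
      Hgap e (lam j) (s j) m ≤ Hgap e (lam j) (s j) (m+1) :=
    fun m hm => hgap_mono e ℓ he hℓ N s j hs lam hsize hsing m hm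
  -- window sum equals the gap indicator
  have hwin : ∀ m : ℤ, m ≤ s j + ((lam j).part 0 : ℤ) →
      (∑ q ∈ Finset.range e, (Hgap e (lam j) (s j) (m - e + q + 1) - Hgap e (lam j) (s j) (m - e + q)))
        = (if bead (lam j) (s j) m then 0 else 1) := by
    intro m hm
    have ht := tele_sum (Hgap e (lam j) (s j)) (m - e) e
      (fun q hq => hmono (m - e + q) (by omega))
    rw [show m - (e:ℤ) + (e:ℕ) = m by push_cast; ring] at ht
    have hstep := Hgap_step e he (lam j) (s j) m
    omega
  -- (i): no jump in the window below a bead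
  have hnojump : ∀ m : ℤ, m ≤ s j + ((lam j).part 0 : ℤ) → bead (lam j) (s j) m →
      ∀ x : ℤ, m - e ≤ x → x < m → ¬ (Hgap e (lam j) (s j) x < Hgap e (lam j) (s j) (x+1)) := by
    intro m hm hb x hx1 hx2 hjump
    have hw := hwin m hm
    rw [if_pos hb] at hw
    have hall := (Finset.sum_eq_zero_iff).1 hw
    have hq : (x - (m - e)).toNat ∈ Finset.range e := by
      simp only [Finset.mem_range]; omega
    have := hall _ hq
    have hxq : m - (e:ℤ) + ((x - (m - e)).toNat : ℤ) = x := by omega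
    rw [hxq] at this
    omega
  -- (ii): unique jump in the window below a gap
  have hjump_ex : ∀ m : ℤ, m ≤ s j + ((lam j).part 0 : ℤ) → ¬ bead (lam j) (s j) m →
      ∃ x : ℤ, (m - e ≤ x ∧ x < m ∧ Hgap e (lam j) (s j) x < Hgap e (lam j) (s j) (x+1)) ∧
        ∀ y : ℤ, m - e ≤ y → y < m → Hgap e (lam j) (s j) y < Hgap e (lam j) (s j) (y+1) →
          y = x := by
    intro m hm hb
    have hw := hwin m hm
    rw [if_neg hb] at hw
    have hex : ∃ q ∈ Finset.range e,
        (Hgap e (lam j) (s j) (m - e + q + 1) - Hgap e (lam j) (s j) (m - e + q)) ≠ 0 := by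
      by_contra hc
      push_neg at hc
      rw [Finset.sum_eq_zero hc] at hw
      omega
    obtain ⟨q0, hq0, hd0⟩ := hex
    rw [Finset.mem_range] at hq0
    have herase := Finset.add_sum_erase (Finset.range e)
      (fun q => (Hgap e (lam j) (s j) (m - e + q + 1) - Hgap e (lam j) (s j) (m - e + q)))
      (Finset.mem_range.2 hq0)
    rw [hw] at herase
    have hz : ∑ q ∈ (Finset.range e).erase q0,
        (Hgap e (lam j) (s j) (m - e + q + 1) - Hgap e (lam j) (s j) (m - e + q)) = 0 := by
      omega
    have hall := (Finset.sum_eq_zero_iff).1 hz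
    refine ⟨m - e + q0, ⟨by omega, by omega, by omega⟩, ?_⟩
    · intro y hy1 hy2 hyj
      have hqy : (y - (m - e)).toNat ∈ Finset.range e := by
        simp only [Finset.mem_range]; omega
      by_contra hne
      have hmem : (y - (m - e)).toNat ∈ (Finset.range e).erase q0 := by
        rw [Finset.mem_erase]
        refine ⟨?_, hqy⟩
        intro heq
        apply hne
        have : ((y - (m - e)).toNat : ℤ) = ((q0 : ℕ) : ℤ) := by rw [heq]
        omega
      have := hall _ hmem
      have hxq : m - (e:ℤ) + ((y - (m - e)).toNat : ℤ) = y := by omega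
      rw [hxq] at this
      omega
  -- the two consecutive beads
  have hbb : ((lam j).part (k+1) : ℤ) - ((k:ℤ)+1) + s j < ((lam j).part k : ℤ) - k + s j := by
    have := beta_lt (lam j) (s j) (show k < k + 1 by omega)
    push_cast at this
    omega
  have hbtop : ((lam j).part k : ℤ) - k + s j ≤ s j + ((lam j).part 0 : ℤ) := by
    have := beta_le (lam j) (s j) (Nat.zero_le k)
    push_cast at this
    omega
  set b : ℤ := ((lam j).part k : ℤ) - k + s j with hbdef
  set b' : ℤ := ((lam j).part (k+1) : ℤ) - ((k:ℤ)+1) + s j with hb'def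
  have hbead_b : bead (lam j) (s j) b := ⟨k, rfl⟩
  have hbead_b' : bead (lam j) (s j) b' := ⟨k+1, by rw [hb'def]; push_cast; ring⟩
  have hgapm : ∀ m : ℤ, b' < m → m < b → ¬ bead (lam j) (s j) m := by
    rintro m h1 h2 ⟨k'', hk''⟩
    have hkgt : k < k'' := by
      by_contra hc
      have := beta_le (lam j) (s j) (le_of_not_gt hc : k'' ≤ k)
      omega
    have := beta_le (lam j) (s j) (show k + 1 ≤ k'' by omega)
    push_cast at this
    omega
  -- jump selector
  have hchoice : ∀ m : ℤ, ∃ x : ℤ, b' < m → m < b →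
      ((m - e ≤ x ∧ x < m ∧
        Hgap e (lam j) (s j) x < Hgap e (lam j) (s j) (x + 1)) ∧
      (∀ y : ℤ, m - e ≤ y → y < m →
        Hgap e (lam j) (s j) y < Hgap e (lam j) (s j) (y+1) → y = x)) := by
    intro m
    by_cases h : b' < m ∧ m < b
    · obtain ⟨x, hx, hu⟩ := hjump_ex m (by omega) (hgapm m h.1 h.2)
      exact ⟨x, fun _ _ => ⟨hx, hu⟩⟩
    · exact ⟨0, fun h1 h2 => absurd ⟨h1, h2⟩ h⟩
  choose jmp hjmp_spec using hchoice
  have hjmp_mem : ∀ m ∈ Finset.Ico (b'+1) b, jmp m ∈ Finset.Ico b' b := by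
    intro m hm
    rw [Finset.mem_Ico] at hm ⊢
    obtain ⟨⟨hw1, hw2, hwj⟩, _⟩ := hjmp_spec m (by omega) (by omega)
    constructor
    · by_contra hc
      push_neg at hc
      exact hnojump b' (by omega) hbead_b' (jmp m) (by omega) (by omega) hwj
    · omega
  have hcardsum := Finset.card_eq_sum_card_fiberwise hjmp_mem
  have hfiber : ∀ x ∈ Finset.Ico b' b,
      e ∣ ((Finset.Ico (b'+1) b).filter (fun m => jmp m = x)).card := by
    intro x hx
    rcases Finset.eq_empty_or_nonempty
      ((Finset.Ico (b'+1) b).filter (fun m => jmp m = x)) with hemp | ⟨m₀, hm₀⟩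
    · rw [hemp]; simp
    · rw [Finset.mem_filter, Finset.mem_Ico] at hm₀
      obtain ⟨⟨hm₀1, hm₀2⟩, hm₀j⟩ := hm₀
      obtain ⟨⟨hw1, hw2, hwj⟩, huniq⟩ := hjmp_spec m₀ (by omega) (by omega)
      rw [hm₀j] at hw1 hw2 hwj
      rw [Finset.mem_Ico] at hx
      have hset : (Finset.Ico (b'+1) b).filter (fun m => jmp m = x)
          = Finset.Ico (x+1) (x+e+1) := by
        ext mm
        rw [Finset.mem_filter, Finset.mem_Ico, Finset.mem_Ico]
        constructor
        · rintro ⟨⟨h1, h2⟩, hj⟩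
          obtain ⟨⟨hv1, hv2, _⟩, _⟩ := hjmp_spec mm (by omega) (by omega)
          rw [hj] at hv1 hv2
          omega
        · rintro ⟨h1, h2⟩
          have hmmb : mm < b := by
            by_contra hc
            push_neg at hc
            exact hnojump b hbtop hbead_b x (by omega) (by omega) hwj
          have hmm : mm ∈ Finset.Ico (b'+1) b := by
            rw [Finset.mem_Ico]
            omega
          refine ⟨⟨by omega, hmmb⟩, ?_⟩
          obtain ⟨_, huniq'⟩ := hjmp_spec mm (by omega) hmmb
          exact (huniq' x (by omega) (by omega) hwj).symm
      rw [hset, Int.card_Ico]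
      refine ⟨1, by omega⟩
  have hdvdcard : e ∣ (Finset.Ico (b'+1) b).card := by
    rw [hcardsum]
    exact Finset.dvd_sum hfiber
  rw [Int.card_Ico] at hdvdcard
  obtain ⟨c, hc⟩ := hdvdcard
  refine ⟨c, ?_⟩
  have hbb' : b - (b'+1) = ((lam j).part k : ℤ) - ((lam j).part (k+1) : ℤ) := by
    rw [hbdef, hb'def]; push_cast; ring
  have hge : (0:ℤ) ≤ b - (b'+1) := by omega
  have := Int.toNat_of_nonneg hge
  rw [← hbb']
  omega

lemma dvd_part (e ℓ : ℕ) (he : 1 ≤ e) (hℓ : 1 ≤ ℓ) (N : ℕ) (s : Fin ℓ → ℤ) (j : Fin ℓ)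
    (hs : ∀ i : Fin ℓ, i ≠ j → s j < s i - (N : ℤ)) (lam : Fin ℓ → Partn)
    (hsize : ∑ i : Fin ℓ, (lam i).size ≤ N)
    (hsing : ∀ z : ZMod e, false ∉ reduce (word e ℓ s lam z)) :
    ∀ k : ℕ, e ∣ (lam j).part k := by
  have key : ∀ n k : ℕ, Classical.choose (lam j).finite ≤ k + n → e ∣ (lam j).part k := by
    intro n
    induction n with
    | zero =>
      intro k hk
      rw [cdsPartn_part_eq_zero (lam j) (by omega)]
      exact dvd_zero e
    | succ n ih =>
      intro k hk
      by_cases hD : Classical.choose (lam j).finite ≤ k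
      · rw [cdsPartn_part_eq_zero (lam j) hD]
        exact dvd_zero e
      · have h1 := ih (k+1) (by omega)
        have h2 := dvd_parts e ℓ he hℓ N s j hs lam hsize hsing k
        have h3 : (e:ℤ) ∣ ((lam j).part (k+1) : ℤ) := Int.natCast_dvd_natCast.2 h1
        have h4 : (e:ℤ) ∣ ((lam j).part k : ℤ) := by
          have : ((lam j).part k : ℤ)
              = (((lam j).part k : ℤ) - ((lam j).part (k+1) : ℤ)) + ((lam j).part (k+1) : ℤ) := by
            ring
          rw [this]
          exact dvd_add h2 h3
        exact Int.natCast_dvd_natCast.1 h4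
  intro k
  exact key (Classical.choose (lam j).finite) k (by omega)
/-- If `s_j < s_i − N` for all `i ≠ j` and `λ` is an `ℓ`-multipartition with
`|λ| ≤ N` that is singular for the level-`ℓ` Uglov `ŝl_e`-crystal with charges `s`
(no '−' remains in any reduced `z`-signature), then the component `λ^{(j)}` is
divisible by `e`. -/
theorem component_divisible_of_singular (e ℓ : ℕ) (he : 1 ≤ e) (hℓ : 1 ≤ ℓ)
    (N : ℕ) (hN : 0 < N) (s : Fin ℓ → ℤ) (j : Fin ℓ)
    (hs : ∀ i : Fin ℓ, i ≠ j → s j < s i - (N : ℤ))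
    (lam : Fin ℓ → Partn) (hsize : ∑ i : Fin ℓ, (lam i).size ≤ N)
    (hsing : ∀ z : ZMod e, false ∉ reduce (word e ℓ s lam z)) :
    ∃ μ : Partn, ∀ k, (lam j).part k = e * μ.part k := by
  have hdvd : ∀ k : ℕ, e ∣ (lam j).part k :=
    dvd_part e ℓ he hℓ N s j hs lam hsize hsing
  refine ⟨⟨fun k => (lam j).part k / e, ?_, ?_⟩, ?_⟩
  · intro k
    exact Nat.div_le_div_right ((lam j).antitone k)
  · obtain ⟨D, hD⟩ := (lam j).finite
    exact ⟨D, fun k hk => by show (lam j).part k / e = 0; rw [hD k hk]; exact Nat.zero_div e⟩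
  · intro k
    exact (Nat.mul_div_cancel' (hdvd k)).symm
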